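/- arXiv:2206.06543 — 3 statements merged into one kernel-verified Lean document; each statement's English description precedes it below -/
import Mathlib

section
/- Let k, l ∈ ℕ, let (G,φ) be a J_{16}(k,l)-free ordered graph on n vertices, and let L be a 3-list-assignment of G. Then there exists a family 𝓛 of 3-list-assignments of G such that: (i) |𝓛| ≤ n^{3(k+l)}; (ii) for every L' ∈ 𝓛 and every vertex v, L'(v) ⊆ L(v); (iii) for every L' ∈ 𝓛, in the subgraph of G induced by X' = {v ∈ V(G) : |L'(v)| ≥ 2}, every vertex has at most 2 forward neighbors (with respect to φ); and (iv) if c is an L-coloring of G with |c^{-1}(i)| ≥ k+l for every i ∈ {1,2,3}, then c is an L'-coloring for some L' ∈ 𝓛. -/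
/-- An ordered graph `(G, φ)` is `J₁₆(k, l)`-free: there are no `k + l + 3` distinct
vertices `a 0 < ⋯ < a (k-1) < u 0 < u 1 < u 2 < b 0 < ⋯ < b (l-1)` (with respect to
`φ`) such that `u 0 u 1` and `u 0 u 2` are edges of `G` and no other pair among these
vertices is adjacent. -/
def J16klFree {V : Type*} (G : SimpleGraph V) (φ : V → ℝ) (k l : ℕ) : Prop :=
  ¬ ∃ (a : Fin k → V) (u : Fin 3 → V) (b : Fin l → V),
      (∀ i j : Fin k, i < j → φ (a i) < φ (a j)) ∧
      (∀ i j : Fin 3, i < j → φ (u i) < φ (u j)) ∧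
      (∀ i j : Fin l, i < j → φ (b i) < φ (b j)) ∧
      (∀ (i : Fin k) (j : Fin 3), φ (a i) < φ (u j)) ∧
      (∀ (i : Fin 3) (j : Fin l), φ (u i) < φ (b j)) ∧
      G.Adj (u 0) (u 1) ∧ G.Adj (u 0) (u 2) ∧ ¬ G.Adj (u 1) (u 2) ∧
      (∀ i j : Fin k, ¬ G.Adj (a i) (a j)) ∧
      (∀ i j : Fin l, ¬ G.Adj (b i) (b j)) ∧
      (∀ (i : Fin k) (j : Fin 3), ¬ G.Adj (a i) (u j)) ∧
      (∀ (i : Fin k) (j : Fin l), ¬ G.Adj (a i) (b j)) ∧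
      (∀ (i : Fin 3) (j : Fin l), ¬ G.Adj (u i) (b j))

namespace J16Aux

open Sum

variable {V : Type*}

noncomputable def extFun [LinearOrder V] (k l : ℕ) (s : Finset V) (h : k + l ≤ s.card) :
    (Fin k ⊕ Fin l) → V :=
  Sum.elim (fun j => s.orderEmbOfFin rfl ⟨j.1, by have := j.2; omega⟩)
           (fun j => s.orderEmbOfFin rfl ⟨s.card - l + j.1, by have := j.2; omega⟩)

lemma extFun_mem [LinearOrder V] {k l : ℕ} {s : Finset V} (h : k + l ≤ s.card)
    (j : Fin k ⊕ Fin l) : extFun k l s h j ∈ s := by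
  cases j with
  | inl j => exact Finset.orderEmbOfFin_mem s rfl _
  | inr j => exact Finset.orderEmbOfFin_mem s rfl _

lemma extFun_inl_mono [LinearOrder V] {k l : ℕ} {s : Finset V} (h : k + l ≤ s.card)
    {j j' : Fin k} (hjj : j < j') : extFun k l s h (inl j) < extFun k l s h (inl j') :=
  (s.orderEmbOfFin rfl).strictMono (show (⟨j.1, _⟩ : Fin s.card) < ⟨j'.1, _⟩ from hjj)

lemma extFun_inr_mono [LinearOrder V] {k l : ℕ} {s : Finset V} (h : k + l ≤ s.card)
    {j j' : Fin l} (hjj : j < j') : extFun k l s h (inr j) < extFun k l s h (inr j') :=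
  (s.orderEmbOfFin rfl).strictMono
    (show (⟨s.card - l + j.1, _⟩ : Fin s.card) < ⟨s.card - l + j'.1, _⟩ by
      simp only [Fin.mk_lt_mk]
      have : (j : ℕ) < j' := hjj
      omega)

lemma extFun_sandwich [LinearOrder V] {k l : ℕ} {s : Finset V} (h : k + l ≤ s.card)
    {w : V} (hw : w ∈ s) (hne : ∀ j, extFun k l s h j ≠ w) :
    (∀ j : Fin k, extFun k l s h (inl j) < w) ∧ (∀ j : Fin l, w < extFun k l s h (inr j)) := by
  have hrange : w ∈ Set.range (s.orderEmbOfFin rfl) := by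
    rw [Finset.range_orderEmbOfFin]; exact hw
  obtain ⟨i, hi⟩ := hrange
  have hk : k ≤ i.1 := by
    by_contra h'
    push_neg at h'
    exact hne (inl ⟨i.1, h'⟩) ((congrArg (s.orderEmbOfFin rfl) (Fin.ext rfl)).trans hi)
  have hl : i.1 < s.card - l := by
    by_contra h'
    push_neg at h'
    have hi2 := i.2
    exact hne (inr ⟨i.1 - (s.card - l), by omega⟩)
      ((congrArg (s.orderEmbOfFin rfl) (Fin.ext (by simp only []; omega))).trans hi)
  constructor
  · intro j
    rw [← hi]
    exact (s.orderEmbOfFin rfl).strictMono (Fin.lt_def.mpr (by have := j.2; simp only []; omega))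
  · intro j
    rw [← hi]
    exact (s.orderEmbOfFin rfl).strictMono (Fin.lt_def.mpr (by have := j.2; simp only []; omega))

variable [Fintype V]

def classF (c : V → Fin 3) (x : Fin 3) : Finset V := Finset.univ.filter (fun w => c w = x)

def GoodCol (G : SimpleGraph V) (L : V → Finset (Fin 3)) (k l : ℕ) (c : V → Fin 3) : Prop :=
  (∀ u v, G.Adj u v → c u ≠ c v) ∧ (∀ v, c v ∈ L v) ∧ ∀ x, k + l ≤ (classF c x).card

def InCol [LinearOrder V] (G : SimpleGraph V) (L : V → Finset (Fin 3)) (k l : ℕ)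
    (t : Fin 3 → (Fin k ⊕ Fin l) → V) (c : V → Fin 3) : Prop :=
  GoodCol G L k l c ∧
    ∀ x, ∃ h : k + l ≤ (classF c x).card, ∀ s, t x s = extFun k l (classF c x) h s

noncomputable def AchS [LinearOrder V] (G : SimpleGraph V) (L : V → Finset (Fin 3)) (k l : ℕ)
    (t : Fin 3 → (Fin k ⊕ Fin l) → V) (v : V) : Finset (Fin 3) :=
  @Finset.filter _ (fun i => ∃ c, InCol G L k l t c ∧ c v = i) (Classical.decPred _) Finset.univ

variable [LinearOrder V] {G : SimpleGraph V} {L : V → Finset (Fin 3)} {k l : ℕ}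
  {t : Fin 3 → (Fin k ⊕ Fin l) → V}

lemma mem_AchS {i : Fin 3} {v : V} :
    i ∈ AchS G L k l t v ↔ ∃ c, InCol G L k l t c ∧ c v = i := by
  simp [AchS]

lemma col_guessed {c : V → Fin 3} (hc : InCol G L k l t c) (x : Fin 3) (s : Fin k ⊕ Fin l) :
    c (t x s) = x := by
  obtain ⟨h, hs⟩ := hc.2 x
  rw [hs s]
  exact (Finset.mem_filter.mp (extFun_mem h s)).2

lemma achS_self {c : V → Fin 3} (hc : InCol G L k l t c) (v : V) :
    c v ∈ AchS G L k l t v := mem_AchS.mpr ⟨c, hc, rfl⟩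

lemma not_guessed {w : V} (hw : 2 ≤ (AchS G L k l t w).card) (x : Fin 3) (s : Fin k ⊕ Fin l) :
    t x s ≠ w := by
  intro heq
  obtain ⟨i, hi, i', hi', hne⟩ := Finset.one_lt_card.mp (lt_of_lt_of_le one_lt_two hw)
  obtain ⟨c, hc, rfl⟩ := mem_AchS.mp hi
  obtain ⟨c', hc', rfl⟩ := mem_AchS.mp hi'
  subst heq
  exact hne (by rw [col_guessed hc, col_guessed hc'])

lemma sandwich_phi {φ : V → ℝ} (horder : ∀ a b : V, a < b ↔ φ a < φ b)
    {c : V → Fin 3} (hc : InCol G L k l t c) {w : V}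
    (hw2 : 2 ≤ (AchS G L k l t w).card) {x : Fin 3} (hcw : c w = x) :
    (∀ j : Fin k, φ (t x (inl j)) < φ w) ∧ (∀ j : Fin l, φ w < φ (t x (inr j))) := by
  obtain ⟨h, hs⟩ := hc.2 x
  have hwmem : w ∈ classF c x := Finset.mem_filter.mpr ⟨Finset.mem_univ _, hcw⟩
  have hne : ∀ j, extFun k l (classF c x) h j ≠ w := by
    intro j heq
    exact not_guessed hw2 x j (by rw [hs]; exact heq)
  have hsw := extFun_sandwich h hwmem hne
  exact ⟨fun j => (horder _ _).mp (by rw [hs]; exact hsw.1 j),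
         fun j => (horder _ _).mp (by rw [hs]; exact hsw.2 j)⟩

lemma pat {φ : V → ℝ} (horder : ∀ a b : V, a < b ↔ φ a < φ b)
    (hfree : J16klFree G φ k l) {p q r : V} {x : Fin 3}
    (hpq : G.Adj p q) (hpr : G.Adj p r) (hqr : ¬ G.Adj q r)
    (h1 : φ p < φ q) (h2 : φ q < φ r)
    (hap : x ∈ AchS G L k l t p) (haq : x ∈ AchS G L k l t q) (har : x ∈ AchS G L k l t r)
    (h2p : 2 ≤ (AchS G L k l t p).card) (h2q : 2 ≤ (AchS G L k l t q).card)
    (h2r : 2 ≤ (AchS G L k l t r).card) : False := by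
  obtain ⟨cp, hcp, hcpx⟩ := mem_AchS.mp hap
  obtain ⟨cq, hcq, hcqx⟩ := mem_AchS.mp haq
  obtain ⟨cr, hcr, hcrx⟩ := mem_AchS.mp har
  have sp := sandwich_phi horder hcp h2p hcpx
  have sq := sandwich_phi horder hcq h2q hcqx
  have sr := sandwich_phi horder hcr h2r hcrx
  obtain ⟨hb, hs⟩ := hcp.2 x
  apply hfree
  refine ⟨fun j => t x (inl j), ![p, q, r], fun j => t x (inr j),
    ?_, ?_, ?_, ?_, ?_, ?_, ?_, ?_, ?_, ?_, ?_, ?_, ?_⟩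
  · intro i j hij
    show φ (t x (inl i)) < φ (t x (inl j))
    rw [hs, hs]
    exact (horder _ _).mp (extFun_inl_mono hb hij)
  · intro i j hij
    fin_cases i <;> fin_cases j <;>
      first
        | exact absurd hij (by decide)
        | simpa using h1
        | simpa using h2
        | simpa using h1.trans h2
  · intro i j hij
    show φ (t x (inr i)) < φ (t x (inr j))
    rw [hs, hs]
    exact (horder _ _).mp (extFun_inr_mono hb hij)
  · intro i j
    have h0 := sp.1 i
    fin_cases j
    · simpa using h0
    · simpa using h0.trans h1
    · simpa using h0.trans (h1.trans h2)
  · intro i j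
    have h3 := sr.2 j
    fin_cases i
    · simpa using (h1.trans h2).trans h3
    · simpa using h2.trans h3
    · simpa using h3
  · simpa using hpq
  · simpa using hpr
  · simpa using hqr
  · intro i j hadj
    exact hcp.1.1 _ _ hadj (by rw [col_guessed hcp, col_guessed hcp])
  · intro i j hadj
    exact hcp.1.1 _ _ hadj (by rw [col_guessed hcp, col_guessed hcp])
  · intro i j hadj
    fin_cases j
    · exact hcp.1.1 _ _ (by simpa using hadj) ((col_guessed hcp x (inl i)).trans hcpx.symm)
    · exact hcq.1.1 _ _ (by simpa using hadj) ((col_guessed hcq x (inl i)).trans hcqx.symm)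
    · exact hcr.1.1 _ _ (by simpa using hadj) ((col_guessed hcr x (inl i)).trans hcrx.symm)
  · intro i j hadj
    exact hcp.1.1 _ _ hadj (by rw [col_guessed hcp, col_guessed hcp])
  · intro i j hadj
    fin_cases i
    · exact hcp.1.1 _ _ (by simpa using hadj) (hcpx.trans (col_guessed hcp x (inr j)).symm)
    · exact hcq.1.1 _ _ (by simpa using hadj) (hcqx.trans (col_guessed hcq x (inr j)).symm)
    · exact hcr.1.1 _ _ (by simpa using hadj) (hcrx.trans (col_guessed hcr x (inr j)).symm)

lemma main_iii {φ : V → ℝ} (hφ : Function.Injective φ)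
    (horder : ∀ a b : V, a < b ↔ φ a < φ b)
    (hfree : J16klFree G φ k l) (v : V)
    (hv : 2 ≤ (AchS G L k l t v).card) :
    ({u : V | G.Adj v u ∧ φ v < φ u ∧ 2 ≤ (AchS G L k l t u).card} : Set V).ncard ≤ 2 := by
  by_contra hcon
  push_neg at hcon
  have hfin : ({u : V | G.Adj v u ∧ φ v < φ u ∧ 2 ≤ (AchS G L k l t u).card} : Set V).Finite :=
    Set.toFinite _
  rw [Set.ncard_eq_toFinset_card _ hfin] at hcon
  obtain ⟨u1, hu1, u2, hu2, u3, hu3, h12, h13, h23⟩ := Finset.two_lt_card.mp hcon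
  rw [Set.Finite.mem_toFinset] at hu1 hu2 hu3
  have hprops : ∀ z, (z = u1 ∨ z = u2 ∨ z = u3) →
      G.Adj v z ∧ φ v < φ z ∧ 2 ≤ (AchS G L k l t z).card := by
    rintro z (rfl|rfl|rfl)
    · exact hu1
    · exact hu2
    · exact hu3
  have noB : ∀ q r y, (q = u1 ∨ q = u2 ∨ q = u3) → (r = u1 ∨ r = u2 ∨ r = u3) → q ≠ r →
      ¬ G.Adj q r → y ∈ AchS G L k l t q → y ∈ AchS G L k l t r →
      y ∈ AchS G L k l t v → False := by
    intro q r y hq hr hne hnadj hyq hyr hyv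
    obtain ⟨haq, hltq, h2q⟩ := hprops q hq
    obtain ⟨har, hltr, h2r⟩ := hprops r hr
    rcases lt_or_gt_of_ne (fun h : φ q = φ r => hne (hφ h)) with hlt | hlt
    · exact pat horder hfree haq har hnadj hltq hlt hyv hyq hyr hv h2q h2r
    · exact pat horder hfree har haq (fun h => hnadj h.symm) hltr hlt hyv hyr hyq hv h2r h2q
  obtain ⟨γ1, hγ1, γ2, hγ2, hγne⟩ := Finset.one_lt_card.mp (lt_of_lt_of_le one_lt_two hv)
  have second : ∀ z, 2 ≤ (AchS G L k l t z).card → ∀ y : Fin 3,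
      ∃ η, η ∈ AchS G L k l t z ∧ η ≠ y := by
    intro z hz y
    obtain ⟨a, ha, b, hb, hab⟩ := Finset.one_lt_card.mp (lt_of_lt_of_le one_lt_two hz)
    by_cases hay : a = y
    · exact ⟨b, hb, fun h => hab (hay.trans h.symm)⟩
    · exact ⟨a, ha, hay⟩
  have memAch : ∀ (c : V → Fin 3), InCol G L k l t c → ∀ z, c z ∈ AchS G L k l t z :=
    fun c hc => achS_self hc
  have hvneGen : ∀ (c : V → Fin 3), InCol G L k l t c → ∀ z,
      (z = u1 ∨ z = u2 ∨ z = u3) → c z ≠ c v := by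
    intro c hc z hz
    exact Ne.symm (hc.1.1 v z (hprops z hz).1)
  have hachOr : ∀ η : Fin 3, η = γ1 ∨ η = γ2 → η ∈ AchS G L k l t v := by
    rintro η (rfl|rfl)
    · exact hγ1
    · exact hγ2
  have STR0 : ∀ c, InCol G L k l t c → ∃ a b w,
      (a = u1 ∨ a = u2 ∨ a = u3) ∧ (b = u1 ∨ b = u2 ∨ b = u3) ∧ (w = u1 ∨ w = u2 ∨ w = u3) ∧
      a ≠ b ∧ a ≠ w ∧ b ≠ w ∧ c a = c b ∧ c w ≠ c a ∧ c a ∉ AchS G L k l t v := by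
    intro c hc
    have hproper := hc.1.1
    have pairNotAch : ∀ a b, (a = u1 ∨ a = u2 ∨ a = u3) → (b = u1 ∨ b = u2 ∨ b = u3) →
        a ≠ b → c a = c b → c a ∉ AchS G L k l t v := by
      intro a b ha hb hab heq hmem
      have hnadj : ¬ G.Adj a b := fun hadj => hproper _ _ hadj heq
      exact noB a b (c a) ha hb hab hnadj (memAch c hc a) (heq ▸ memAch c hc b) hmem
    have hall : ¬ (c u1 = c u2 ∧ c u1 = c u3) := by
      rintro ⟨e12, e13⟩
      have hx : c u1 ∉ AchS G L k l t v :=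
        pairNotAch u1 u2 (Or.inl rfl) (Or.inr (Or.inl rfl)) h12 e12
      have hxγ1 : c u1 ≠ γ1 := fun h => hx (h ▸ hγ1)
      have hxγ2 : c u1 ≠ γ2 := fun h => hx (h ▸ hγ2)
      obtain ⟨η1, hη1, hη1x⟩ := second u1 (hprops u1 (Or.inl rfl)).2.2 (c u1)
      obtain ⟨η2, hη2, hη2x⟩ := second u2 (hprops u2 (Or.inr (Or.inl rfl))).2.2 (c u1)
      obtain ⟨η3, hη3, hη3x⟩ := second u3 (hprops u3 (Or.inr (Or.inr rfl))).2.2 (c u1)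
      have hmem : ∀ η : Fin 3, η ≠ c u1 → η = γ1 ∨ η = γ2 := by
        have hdec : ∀ η x g1 g2 : Fin 3, η ≠ x → x ≠ g1 → x ≠ g2 → g1 ≠ g2 →
            (η = g1 ∨ η = g2) := by decide
        exact fun η hη => hdec η (c u1) γ1 γ2 hη hxγ1 hxγ2 hγne
      have hη2' : η2 ≠ c u2 := by rw [← e12]; exact hη2x
      have hη3' : η3 ≠ c u3 := by rw [← e13]; exact hη3x
      have hAdj12 : ¬ G.Adj u1 u2 := fun hadj => hproper _ _ hadj e12
      have hAdj13 : ¬ G.Adj u1 u3 := fun hadj => hproper _ _ hadj e13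
      have hAdj23 : ¬ G.Adj u2 u3 := fun hadj => hproper _ _ hadj (e12.symm.trans e13)
      have finish : ∀ (a b : V) (η : Fin 3), (a = u1 ∨ a = u2 ∨ a = u3) →
          (b = u1 ∨ b = u2 ∨ b = u3) → a ≠ b → ¬G.Adj a b → η ∈ AchS G L k l t a →
          η ∈ AchS G L k l t b → (η = γ1 ∨ η = γ2) → False :=
        fun a b η ha hb hab hnadj hma hmb hγ => noB a b η ha hb hab hnadj hma hmb (hachOr η hγ)
      rcases hmem η1 hη1x with r1 | r1 <;> rcases hmem η2 hη2x with r2 | r2 <;>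
        rcases hmem η3 hη3x with r3 | r3
      · exact finish u1 u2 γ1 (Or.inl rfl) (Or.inr (Or.inl rfl)) h12 hAdj12 (r1 ▸ hη1) (r2 ▸ hη2) (Or.inl rfl)
      · exact finish u1 u2 γ1 (Or.inl rfl) (Or.inr (Or.inl rfl)) h12 hAdj12 (r1 ▸ hη1) (r2 ▸ hη2) (Or.inl rfl)
      · exact finish u1 u3 γ1 (Or.inl rfl) (Or.inr (Or.inr rfl)) h13 hAdj13 (r1 ▸ hη1) (r3 ▸ hη3) (Or.inl rfl)
      · exact finish u2 u3 γ2 (Or.inr (Or.inl rfl)) (Or.inr (Or.inr rfl)) h23 hAdj23 (r2 ▸ hη2) (r3 ▸ hη3) (Or.inr rfl)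
      · exact finish u2 u3 γ1 (Or.inr (Or.inl rfl)) (Or.inr (Or.inr rfl)) h23 hAdj23 (r2 ▸ hη2) (r3 ▸ hη3) (Or.inl rfl)
      · exact finish u1 u3 γ2 (Or.inl rfl) (Or.inr (Or.inr rfl)) h13 hAdj13 (r1 ▸ hη1) (r3 ▸ hη3) (Or.inr rfl)
      · exact finish u1 u2 γ2 (Or.inl rfl) (Or.inr (Or.inl rfl)) h12 hAdj12 (r1 ▸ hη1) (r2 ▸ hη2) (Or.inr rfl)
      · exact finish u1 u2 γ2 (Or.inl rfl) (Or.inr (Or.inl rfl)) h12 hAdj12 (r1 ▸ hη1) (r2 ▸ hη2) (Or.inr rfl)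
    by_cases h12e : c u1 = c u2
    · exact ⟨u1, u2, u3, Or.inl rfl, Or.inr (Or.inl rfl), Or.inr (Or.inr rfl), h12, h13, h23,
        h12e, fun h => hall ⟨h12e, h.symm⟩,
        pairNotAch u1 u2 (Or.inl rfl) (Or.inr (Or.inl rfl)) h12 h12e⟩
    · by_cases h13e : c u1 = c u3
      · exact ⟨u1, u3, u2, Or.inl rfl, Or.inr (Or.inr rfl), Or.inr (Or.inl rfl), h13, h12,
          fun h => h23 h.symm, h13e, fun h => h12e h.symm,
          pairNotAch u1 u3 (Or.inl rfl) (Or.inr (Or.inr rfl)) h13 h13e⟩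
      · by_cases h23e : c u2 = c u3
        · exact ⟨u2, u3, u1, Or.inr (Or.inl rfl), Or.inr (Or.inr rfl), Or.inl rfl, h23,
            fun h => h12 h.symm, fun h => h13 h.symm, h23e, fun h => h12e h,
            pairNotAch u2 u3 (Or.inr (Or.inl rfl)) (Or.inr (Or.inr rfl)) h23 h23e⟩
        · exfalso
          have hdec : ∀ a b c d : Fin 3, b ≠ a → c ≠ a → d ≠ a → b ≠ c → b ≠ d → c ≠ d →
              False := by decide
          exact hdec (c v) (c u1) (c u2) (c u3) (hvneGen c hc u1 (Or.inl rfl))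
            (hvneGen c hc u2 (Or.inr (Or.inl rfl))) (hvneGen c hc u3 (Or.inr (Or.inr rfl)))
            h12e h13e h23e
  have cover : ∀ a b w, (a = u1 ∨ a = u2 ∨ a = u3) → (b = u1 ∨ b = u2 ∨ b = u3) →
      (w = u1 ∨ w = u2 ∨ w = u3) → a ≠ b → a ≠ w → b ≠ w → ∀ z,
      (z = u1 ∨ z = u2 ∨ z = u3) → z = a ∨ z = b ∨ z = w := by
    classical
    intro a b w ha hb hw hab haw hbw z hz
    have hsub : ({a, b, w} : Finset V) ⊆ {u1, u2, u3} := by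
      intro y hy
      simp only [Finset.mem_insert, Finset.mem_singleton] at hy ⊢
      rcases hy with rfl|rfl|rfl
      · exact ha
      · exact hb
      · exact hw
    have hcard1 : ({a, b, w} : Finset V).card = 3 := by
      rw [Finset.card_insert_of_notMem (by simp [hab, haw]),
        Finset.card_insert_of_notMem (by simp [hbw]), Finset.card_singleton]
    have hcard2 : ({u1, u2, u3} : Finset V).card ≤ 3 := by
      calc ({u1, u2, u3} : Finset V).card ≤ ({u2, u3} : Finset V).card + 1 :=
            Finset.card_insert_le _ _
        _ ≤ (({u3} : Finset V).card + 1) + 1 := by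
            exact Nat.add_le_add_right (Finset.card_insert_le _ _) 1
        _ = 3 := by rw [Finset.card_singleton]
    have heqset := Finset.eq_of_subset_of_card_le hsub (by rw [hcard1]; exact hcard2)
    have hzmem : z ∈ ({a, b, w} : Finset V) := by
      rw [heqset]
      simp only [Finset.mem_insert, Finset.mem_singleton]
      exact hz
    simpa using hzmem
  obtain ⟨c1, hc1, hc1v⟩ := mem_AchS.mp hγ1
  obtain ⟨c2, hc2, hc2v⟩ := mem_AchS.mp hγ2
  obtain ⟨a1, b1, w1, hIa1, hIb1, hIw1, hab1, haw1, hbw1, heq1, hw1ne, hnach1⟩ := STR0 c1 hc1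
  set δ := c1 a1 with hδ
  have hδγ1 : δ ≠ γ1 := fun h => hnach1 (h ▸ hγ1)
  have hδγ2 : δ ≠ γ2 := fun h => hnach1 (h ▸ hγ2)
  have thirdcolor : ∀ η : Fin 3, η ≠ δ → η = γ1 ∨ η = γ2 := by
    have hdec : ∀ η d g1 g2 : Fin 3, η ≠ d → d ≠ g1 → d ≠ g2 → g1 ≠ g2 →
        (η = g1 ∨ η = g2) := by decide
    exact fun η hη => hdec η δ γ1 γ2 hη hδγ1 hδγ2 hγne
  have hc1w1 : c1 w1 = γ2 := by
    have hne1 : c1 w1 ≠ δ := hw1ne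
    have hne2 : c1 w1 ≠ γ1 := by rw [← hc1v]; exact hvneGen c1 hc1 w1 hIw1
    rcases thirdcolor (c1 w1) hne1 with h|h
    · exact absurd h hne2
    · exact h
  obtain ⟨a2, b2, w2, hIa2, hIb2, hIw2, hab2, haw2, hbw2, heq2, hw2ne, hnach2⟩ := STR0 c2 hc2
  have hδ2 : c2 a2 = δ := by
    have h1' : c2 a2 ≠ γ1 := fun h => hnach2 (h ▸ hγ1)
    have h2' : c2 a2 ≠ γ2 := fun h => hnach2 (h ▸ hγ2)
    have hdec : ∀ x d g1 g2 : Fin 3, x ≠ g1 → x ≠ g2 → d ≠ g1 → d ≠ g2 → g1 ≠ g2 →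
        x = d := by decide
    exact hdec _ _ _ _ h1' h2' hδγ1 hδγ2 hγne
  have hc2w2 : c2 w2 = γ1 := by
    have hne1 : c2 w2 ≠ δ := by rw [← hδ2]; exact hw2ne
    have hne2 : c2 w2 ≠ γ2 := by rw [← hc2v]; exact hvneGen c2 hc2 w2 hIw2
    rcases thirdcolor (c2 w2) hne1 with h|h
    · exact h
    · exact absurd h hne2
  by_cases hww : w1 = w2
  · have hγ2w1 : γ2 ∈ AchS G L k l t w1 := hc1w1 ▸ memAch c1 hc1 w1
    have hγ1w1 : γ1 ∈ AchS G L k l t w1 := by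
      rw [hww]
      exact hc2w2 ▸ memAch c2 hc2 w2
    obtain ⟨η, hηmem, hηδ⟩ := second a1 (hprops a1 hIa1).2.2 δ
    obtain ⟨c3, hc3, hc3p⟩ := mem_AchS.mp hηmem
    obtain ⟨a3, b3, w3, hIa3, hIb3, hIw3, hab3, haw3, hbw3, heq3, hw3ne, hnach3⟩ := STR0 c3 hc3
    have hδ3 : c3 a3 = δ := by
      have h1' : c3 a3 ≠ γ1 := fun h => hnach3 (h ▸ hγ1)
      have h2' : c3 a3 ≠ γ2 := fun h => hnach3 (h ▸ hγ2)
      have hdec : ∀ x d g1 g2 : Fin 3, x ≠ g1 → x ≠ g2 → d ≠ g1 → d ≠ g2 → g1 ≠ g2 →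
          x = d := by decide
      exact hdec _ _ _ _ h1' h2' hδγ1 hδγ2 hγne
    have hpa3 : a1 ≠ a3 := fun h => hηδ (by rw [← hc3p, h, hδ3])
    have hpb3 : a1 ≠ b3 := fun h => hηδ (by rw [← hc3p, h, ← heq3, hδ3])
    have hpw3 : a1 = w3 := by
      rcases cover a3 b3 w3 hIa3 hIb3 hIw3 hab3 haw3 hbw3 a1 hIa1 with h|h|h
      · exact absurd h hpa3
      · exact absurd h hpb3
      · exact h
    have hq3 : c3 b1 = δ := by
      rcases cover a3 b3 w3 hIa3 hIb3 hIw3 hab3 haw3 hbw3 b1 hIb1 with h|h|h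
      · rw [h, hδ3]
      · rw [h, ← heq3, hδ3]
      · exact absurd (h.trans hpw3.symm) (fun hh => hab1 hh.symm)
    have hw13 : c3 w1 = δ := by
      rcases cover a3 b3 w3 hIa3 hIb3 hIw3 hab3 haw3 hbw3 w1 hIw1 with h|h|h
      · rw [h, hδ3]
      · rw [h, ← heq3, hδ3]
      · exact absurd (h.trans hpw3.symm) (fun hh => haw1 hh.symm)
    have hnadj : ¬ G.Adj b1 w1 := fun hadj => hc3.1.1 _ _ hadj (hq3.trans hw13.symm)
    obtain ⟨η2, hη2mem, hη2δ⟩ := second b1 (hprops b1 hIb1).2.2 δ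
    rcases thirdcolor η2 hη2δ with h|h
    · exact noB b1 w1 γ1 hIb1 hIw1 hbw1 hnadj (h ▸ hη2mem) hγ1w1 hγ1
    · exact noB b1 w1 γ2 hIb1 hIw1 hbw1 hnadj (h ▸ hη2mem) hγ2w1 hγ2
  · have hc1w2 : c1 w2 = δ := by
      rcases cover a1 b1 w1 hIa1 hIb1 hIw1 hab1 haw1 hbw1 w2 hIw2 with h|h|h
      · rw [h]
      · rw [h, ← heq1]
      · exact absurd h.symm hww
    obtain ⟨s, hIs, hsw2, hsw1, hc1s⟩ : ∃ s, (s = u1 ∨ s = u2 ∨ s = u3) ∧ s ≠ w2 ∧ s ≠ w1 ∧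
        c1 s = δ := by
      rcases cover a1 b1 w1 hIa1 hIb1 hIw1 hab1 haw1 hbw1 w2 hIw2 with h|h|h
      · exact ⟨b1, hIb1, fun hh => hab1 (hh.trans h).symm, hbw1, heq1.symm ▸ rfl⟩
      · exact ⟨a1, hIa1, fun hh => hab1 (hh.trans h), haw1, rfl⟩
      · exact absurd h.symm hww
    have hc2s : c2 s = δ := by
      rcases cover a2 b2 w2 hIa2 hIb2 hIw2 hab2 haw2 hbw2 s hIs with h|h|h
      · rw [h, hδ2]
      · rw [h, ← heq2, hδ2]
      · exact absurd h hsw2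
    have hc2w1 : c2 w1 = δ := by
      rcases cover a2 b2 w2 hIa2 hIb2 hIw2 hab2 haw2 hbw2 w1 hIw1 with h|h|h
      · rw [h, hδ2]
      · rw [h, ← heq2, hδ2]
      · exact absurd h hww
    have hnadj2 : ¬ G.Adj s w2 := fun hadj => hc1.1.1 _ _ hadj (hc1s.trans hc1w2.symm)
    have hnadj1 : ¬ G.Adj s w1 := fun hadj => hc2.1.1 _ _ hadj (hc2s.trans hc2w1.symm)
    have hγ2w1 : γ2 ∈ AchS G L k l t w1 := hc1w1 ▸ memAch c1 hc1 w1
    have hγ1w2 : γ1 ∈ AchS G L k l t w2 := hc2w2 ▸ memAch c2 hc2 w2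
    obtain ⟨η, hηmem, hηδ⟩ := second s (hprops s hIs).2.2 δ
    rcases thirdcolor η hηδ with h|h
    · exact noB s w2 γ1 hIs hIw2 hsw2 hnadj2 (h ▸ hηmem) hγ1w2 hγ1
    · exact noB s w1 γ2 hIs hIw1 hsw1 hnadj1 (h ▸ hηmem) hγ2w1 hγ2

end J16Aux


/-- For a `J₁₆(k, l)`-free ordered graph `(G, φ)` on `n` vertices with a
3-list-assignment `L`, there is a family `𝓛` of at most `n ^ (3(k+l))` refinements
of `L` such that for each member every vertex with a list of size at least 2 has at
most 2 forward neighbors among such vertices, and every `L`-coloring with all color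
classes of size at least `k + l` is an `L'`-coloring for some `L' ∈ 𝓛`. -/
theorem exists_profile_few_forward_neighbors
    {V : Type*} [Fintype V] (k l : ℕ) (G : SimpleGraph V) (φ : V → ℝ)
    (hφ : Function.Injective φ) (hfree : J16klFree G φ k l)
    (L : V → Finset (Fin 3)) :
    ∃ 𝓛 : Finset (V → Finset (Fin 3)),
      𝓛.card ≤ (Fintype.card V) ^ (3 * (k + l)) ∧
      (∀ L' ∈ 𝓛, ∀ v : V, L' v ⊆ L v) ∧
      (∀ L' ∈ 𝓛, ∀ v : V, 2 ≤ (L' v).card →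
        ({u : V | G.Adj v u ∧ φ v < φ u ∧ 2 ≤ (L' u).card} : Set V).ncard ≤ 2) ∧
      (∀ c : V → Fin 3, (∀ u v, G.Adj u v → c u ≠ c v) → (∀ v, c v ∈ L v) →
        (∀ i : Fin 3, k + l ≤ ({v : V | c v = i} : Set V).ncard) →
        ∃ L' ∈ 𝓛, ∀ v, c v ∈ L' v) := by
  classical
  letI : LinearOrder V := LinearOrder.lift' φ hφ
  have horder : ∀ a b : V, a < b ↔ φ a < φ b := fun a b => Iff.rfl
  refine ⟨Finset.image (fun t => fun w => J16Aux.AchS G L k l t w) Finset.univ, ?_, ?_, ?_, ?_⟩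
  · calc (Finset.image (fun t => fun w => J16Aux.AchS G L k l t w) Finset.univ).card
        ≤ (Finset.univ : Finset (Fin 3 → (Fin k ⊕ Fin l) → V)).card := Finset.card_image_le
      _ = Fintype.card V ^ (3 * (k + l)) := by
          rw [Finset.card_univ, Fintype.card_fun, Fintype.card_fun, Fintype.card_sum,
            Fintype.card_fin, Fintype.card_fin, Fintype.card_fin, ← pow_mul, mul_comm]
  · intro L' hL' w i hi
    obtain ⟨t, -, rfl⟩ := Finset.mem_image.mp hL'
    obtain ⟨c, hc, rfl⟩ := J16Aux.mem_AchS.mp hi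
    exact hc.1.2.1 w
  · intro L' hL' v hv
    obtain ⟨t, -, rfl⟩ := Finset.mem_image.mp hL'
    exact J16Aux.main_iii hφ horder hfree v hv
  · intro c hprop hlist hclass
    have hcard : ∀ x : Fin 3, k + l ≤ (J16Aux.classF c x).card := by
      intro x
      have h1 := hclass x
      have h2 : ({w : V | c w = x} : Set V) = ↑(J16Aux.classF c x) := by
        ext w; simp [J16Aux.classF]
      rwa [h2, Set.ncard_coe_finset] at h1
    have hgood : J16Aux.GoodCol G L k l c := ⟨hprop, hlist, hcard⟩
    have hin : J16Aux.InCol G L k l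
        (fun x s => J16Aux.extFun k l (J16Aux.classF c x) (hcard x) s) c :=
      ⟨hgood, fun x => ⟨hcard x, fun s => rfl⟩⟩
    exact ⟨fun w => J16Aux.AchS G L k l
        (fun x s => J16Aux.extFun k l (J16Aux.classF c x) (hcard x) s) w,
      Finset.mem_image_of_mem _ (Finset.mem_univ _),
      fun w => J16Aux.achS_self hin w⟩
end

section
/- Let k, l ∈ ℕ, let (G,φ) be a J_{16}(k,l)-free ordered graph on n vertices, and let L be a 3-list-assignment of G. Then there exists a family 𝓛 of 3-list-assignments of G such that: (i) |𝓛| ≤ 3(n+1)^{k+l}; (ii) for every L' ∈ 𝓛 and every vertex v, L'(v) ⊆ L(v); (iii) for every L' ∈ 𝓛 there is a 2-element set T ⊆ {1,2,3} such that L'(v) = T for every vertex v with |L'(v)| ≥ 2; and (iv) if c is an L-coloring of G with |c^{-1}(i)| < k+l for some i ∈ {1,2,3}, then c is an L'-coloring for some L' ∈ 𝓛. -/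
/-- For a `J₁₆(k, l)`-free ordered graph `(G, φ)` on `n` vertices with a
3-list-assignment `L`, there is a family `𝓛` of at most `3(n+1)^(k+l)` refinements
of `L` such that for each member all lists of size at least 2 are equal to a common
2-element set, and every `L`-coloring with some color class of size less than `k + l`
is an `L'`-coloring for some `L' ∈ 𝓛`. -/
theorem exists_profile_common_pair_lists
    {V : Type*} [Fintype V] (k l : ℕ) (G : SimpleGraph V) (φ : V → ℝ)
    (hφ : Function.Injective φ) (hfree : J16klFree G φ k l)
    (L : V → Finset (Fin 3)) :
    ∃ 𝓛 : Finset (V → Finset (Fin 3)),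
      𝓛.card ≤ 3 * (Fintype.card V + 1) ^ (k + l) ∧
      (∀ L' ∈ 𝓛, ∀ v : V, L' v ⊆ L v) ∧
      (∀ L' ∈ 𝓛, ∃ T : Finset (Fin 3), T.card = 2 ∧
        ∀ v : V, 2 ≤ (L' v).card → L' v = T) ∧
      (∀ c : V → Fin 3, (∀ u v, G.Adj u v → c u ≠ c v) → (∀ v, c v ∈ L v) →
        (∃ i : Fin 3, ({v : V | c v = i} : Set V).ncard < k + l) →
        ∃ L' ∈ 𝓛, ∀ v, c v ∈ L' v) := by
  classical
  set m := k + l with hm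
  -- decode a function `Fin m → Option V` into a vertex set, build a list assignment
  let F : Fin 3 × (Fin m → Option V) → (V → Finset (Fin 3)) :=
    fun p v => if ∃ j, p.2 j = some v then L v ∩ {p.1} else L v ∩ {p.1}ᶜ
  refine ⟨Finset.image F Finset.univ, ?_, ?_, ?_, ?_⟩
  · calc (Finset.image F Finset.univ).card ≤ (Finset.univ : Finset (Fin 3 × (Fin m → Option V))).card :=
          Finset.card_image_le
      _ = 3 * (Fintype.card V + 1) ^ m := by
          simp [Finset.card_univ, Fintype.card_fun]
  · intro L' hL' v
    obtain ⟨p, _, rfl⟩ := Finset.mem_image.1 hL'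
    by_cases h : ∃ j, p.2 j = some v <;> simp [F, h, Finset.inter_subset_left]
  · intro L' hL'
    obtain ⟨p, _, rfl⟩ := Finset.mem_image.1 hL'
    refine ⟨{p.1}ᶜ, ?_, ?_⟩
    · rw [Finset.card_compl]; simp
    · intro v hv
      by_cases h : ∃ j, p.2 j = some v
      · exfalso
        have hsub : F p v ⊆ {p.1} := by
          simp only [F, h, if_true]
          exact Finset.inter_subset_right
        have h2 := Finset.card_le_card hsub
        rw [Finset.card_singleton] at h2
        omega
      · have h1 : F p v ⊆ {p.1}ᶜ := by simp only [F, h, if_false]; exact Finset.inter_subset_right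
        refine Finset.eq_of_subset_of_card_le h1 ?_
        have : ({p.1}ᶜ : Finset (Fin 3)).card = 2 := by rw [Finset.card_compl]; simp
        simp only [F, h, if_false] at hv ⊢
        omega
  · rintro c _ hLc ⟨i, hi⟩
    set S : Finset V := Finset.univ.filter (fun v => c v = i) with hS
    have hScard : S.card < m := by
      have : ({v : V | c v = i} : Set V).ncard = S.card := by
        rw [Set.ncard_eq_toFinset_card']
        congr 1
        ext v; simp [S]
      omega
    have hlen : S.toList.length ≤ m := by
      rw [Finset.length_toList]; omega
    set f : Fin m → Option V := fun j => S.toList[(j : ℕ)]? with hf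
    have hmem : ∀ v : V, (∃ j, f j = some v) ↔ v ∈ S := by
      intro v
      constructor
      · rintro ⟨j, hj⟩
        have : v ∈ S.toList := List.mem_of_getElem? hj
        rwa [Finset.mem_toList] at this
      · intro hv
        rw [← Finset.mem_toList, List.mem_iff_getElem?] at hv
        obtain ⟨n, hn⟩ := hv
        have hnlt : n < S.toList.length := by
          by_contra h
          rw [List.getElem?_eq_none (le_of_not_gt h)] at hn
          exact nomatch hn
        exact ⟨⟨n, lt_of_lt_of_le hnlt hlen⟩, hn⟩
    refine ⟨F (i, f), Finset.mem_image.2 ⟨(i, f), Finset.mem_univ _, rfl⟩, ?_⟩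
    intro v
    by_cases hv : c v = i
    · have : v ∈ S := by simp [S, hv]
      have hj : ∃ j, f j = some v := (hmem v).2 this
      simp only [F, hj, if_true]
      exact Finset.mem_inter.2 ⟨hLc v, by simp [hv]⟩
    · have hvS : v ∉ S := by simp [S, hv]
      have : ¬ ∃ j, f j = some v := fun h => hvS ((hmem v).1 h)
      simp only [F, this, if_false]
      exact Finset.mem_inter.2 ⟨hLc v, by simp [hv]⟩
end

section
/- Let k, l ∈ ℕ, let (G,φ) be a J_{16}(k,l)-free ordered graph, and let L be a 3-list-assignment of G. Let X = {v ∈ V(G) : |L(v)| ≥ 2}, and assume that in the subgraph of G induced by X every vertex has at most two forward neighbors (with respect to φ) and that |X| ≥ 3k + 3l + 6. Then there exists a family 𝓛 of 3-list-assignments of G such that: (i) |𝓛| ≤ 3^{3k+3l+6}; (ii) for every L* ∈ 𝓛 and every vertex v, L*(v) ⊆ L(v); (iii) for every L* ∈ 𝓛, the subgraph of G induced by {v ∈ V(G) : |L*(v)| ≥ 2} is chordal; and (iv) for every L-coloring c of G there exists L* ∈ 𝓛 such that c is an L*-coloring of G. -/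
/-- A graph is chordal if it contains no induced cycle of length at least 4. -/
def Chordal {V : Type*} (G : SimpleGraph V) : Prop :=
  ∀ n : ℕ, 4 ≤ n →
    ¬ ∃ f : ZMod n → V, Function.Injective f ∧
        ∀ i j : ZMod n, G.Adj (f i) (f j) ↔ (j = i + 1 ∨ i = j + 1)


section Auxiliary

open Finset

variable {V : Type*}


/-- Sorted enumeration of `n` elements of a finset, increasing w.r.t. an injective `φ`. -/
lemma exists_monotone_enum (φ : V → ℝ) (hφ : Function.Injective φ)
    (Q : Finset V) (n : ℕ) (hn : n ≤ Q.card) :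
    ∃ g : Fin n → V, (∀ i, g i ∈ Q) ∧ (∀ i j : Fin n, i < j → φ (g i) < φ (g j)) := by
  haveI : IsTrans V (fun a b => φ a ≤ φ b) := ⟨fun _ _ _ => le_trans⟩
  haveI : IsAntisymm V (fun a b => φ a ≤ φ b) := ⟨fun a b h1 h2 => hφ (le_antisymm h1 h2)⟩
  haveI : IsTotal V (fun a b => φ a ≤ φ b) := ⟨fun a b => le_total _ _⟩
  set ll := Q.sort (fun a b => φ a ≤ φ b) with hll
  have hlen : ll.length = Q.card := Q.length_sort _
  have hsorted : ll.Pairwise (fun a b => φ a ≤ φ b) := Q.pairwise_sort _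
  have hnodup : ll.Nodup := Q.sort_nodup _
  have hcast : ∀ i : Fin n, (i : ℕ) < ll.length := fun i => by omega
  refine ⟨fun i => ll.get ⟨i, hcast i⟩, fun i => ?_, fun i j hij => ?_⟩
  · exact (Finset.mem_sort (α := V) (fun a b => φ a ≤ φ b)).1 (List.get_mem ll _)
  · have hle : φ (ll.get ⟨i, hcast i⟩) ≤ φ (ll.get ⟨j, hcast j⟩) :=
      List.Pairwise.rel_get_of_lt hsorted (Fin.mk_lt_mk.2 hij)
    have hne : ll.get ⟨i, hcast i⟩ ≠ ll.get ⟨j, hcast j⟩ := by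
      intro h
      have := hnodup.get_inj_iff.1 h
      simp only [Fin.mk.injEq] at this
      omega
    exact lt_of_le_of_ne hle (fun h => hne (hφ h))


variable [DecidableEq V]


/-- Extract the `n` top elements (w.r.t. injective `φ`) of a finset. -/
lemma exists_top_subset (φ : V → ℝ) (hφ : Function.Injective φ) :
    ∀ (n : ℕ) (X : Finset V), n ≤ X.card →
    ∃ B ⊆ X, B.card = n ∧ ∀ x ∈ X, x ∉ B → ∀ b ∈ B, φ x < φ b := by
  intro n
  induction n with
  | zero => intro X _; exact ⟨∅, empty_subset _, card_empty, by simp⟩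
  | succ n ih =>
    intro X hn
    have hne : X.Nonempty := card_pos.1 (by omega)
    obtain ⟨m, hm, hmax⟩ := X.exists_max_image φ hne
    have hcard : n ≤ (X.erase m).card := by
      rw [card_erase_of_mem hm]; omega
    obtain ⟨B', hB'sub, hB'card, hB'top⟩ := ih (X.erase m) hcard
    have hmB' : m ∉ B' := fun h => (mem_erase.1 (hB'sub h)).1 rfl
    refine ⟨insert m B', ?_, ?_, ?_⟩
    · intro x hx
      rcases mem_insert.1 hx with rfl | hx
      · exact hm
      · exact (mem_erase.1 (hB'sub hx)).2
    · rw [card_insert_of_notMem hmB', hB'card]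
    · intro x hx hxB b hb
      rcases mem_insert.1 hb with rfl | hb
      · have hxb : x ≠ b := fun h => hxB (h ▸ mem_insert_self _ _)
        exact lt_of_le_of_ne (hmax x hx) (fun h => hxb (hφ h))
      · have hxm : x ≠ m := fun h => hxB (h ▸ mem_insert_self _ _)
        exact hB'top x (mem_erase.2 ⟨hxm, hx⟩) (fun h => hxB (mem_insert_of_mem h)) b hb

/-- Greedy independent set: if every element has at most 2 "forward neighbours"
inside `P`, then `P` contains an independent set of any size `n` with `3n ≤ |P| + 2`. -/
lemma greedy_indep (G : SimpleGraph V) [DecidableRel G.Adj] (φ : V → ℝ)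
    (hφ : Function.Injective φ) :
    ∀ (n : ℕ) (P : Finset V),
    (∀ p ∈ P, (P.filter (fun q => G.Adj p q ∧ φ p < φ q)).card ≤ 2) →
    3 * n ≤ P.card + 2 →
    ∃ Q ⊆ P, Q.card = n ∧ ∀ a ∈ Q, ∀ b ∈ Q, a ≠ b → ¬ G.Adj a b := by
  intro n
  induction n with
  | zero => intro P _ _; exact ⟨∅, empty_subset _, card_empty, by simp⟩
  | succ n ih =>
    intro P hbd hcard
    have hne : P.Nonempty := card_pos.1 (by omega)
    obtain ⟨p, hp, hmin⟩ := P.exists_min_image φ hne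
    set P' := (P.erase p).filter (fun q => ¬ G.Adj p q) with hP'
    have hP'sub : P' ⊆ P := (filter_subset _ _).trans (erase_subset _ _)
    have hsplit : P'.card
        + ((P.erase p).filter (fun q => G.Adj p q)).card = (P.erase p).card := by
      rw [hP', add_comm]
      exact card_filter_add_card_filter_not _
    have hadjsub : (P.erase p).filter (fun q => G.Adj p q)
        ⊆ P.filter (fun q => G.Adj p q ∧ φ p < φ q) := by
      intro q hq
      obtain ⟨hq1, hq2⟩ := mem_filter.1 hq
      obtain ⟨hqp, hqP⟩ := mem_erase.1 hq1
      refine mem_filter.2 ⟨hqP, hq2, ?_⟩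
      exact lt_of_le_of_ne (hmin q hqP) (fun h => hqp (hφ h).symm)
    have hadjcard : ((P.erase p).filter (fun q => G.Adj p q)).card ≤ 2 :=
      le_trans (card_le_card hadjsub) (hbd p hp)
    have hcard' : 3 * n ≤ P'.card + 2 := by
      have h1 : (P.erase p).card = P.card - 1 := card_erase_of_mem hp
      have h2 : 1 ≤ P.card := card_pos.2 hne
      omega
    have hbd' : ∀ q ∈ P', (P'.filter (fun r => G.Adj q r ∧ φ q < φ r)).card ≤ 2 := by
      intro q hq
      refine le_trans (card_le_card ?_) (hbd q (hP'sub hq))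
      exact filter_subset_filter _ hP'sub
    obtain ⟨Q', hQ'sub, hQ'card, hQ'ind⟩ := ih P' hbd' hcard'
    have hpQ' : p ∉ Q' := fun h => (mem_erase.1 (mem_of_mem_filter _ (hQ'sub h))).1 rfl
    refine ⟨insert p Q', ?_, ?_, ?_⟩
    · intro x hx
      rcases mem_insert.1 hx with rfl | hx
      · exact hp
      · exact hP'sub (hQ'sub hx)
    · rw [card_insert_of_notMem hpQ', hQ'card]
    · intro a ha b hb hab
      rcases mem_insert.1 ha with ha' | ha'
      · subst ha'
        rcases mem_insert.1 hb with hb' | hb'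
        · exact absurd hb'.symm hab
        · exact (mem_filter.1 (hQ'sub hb')).2
      · rcases mem_insert.1 hb with hb' | hb'
        · subst hb'
          intro hadj
          exact (mem_filter.1 (hQ'sub ha')).2 hadj.symm
        · exact hQ'ind a ha' b hb' hab


end Auxiliary

section Core
open Finset

lemma chordal_of_no_bad (G : SimpleGraph V) (φ : V → ℝ) (hφ : Function.Injective φ)
    (Y : Set V)
    (hY : ∀ v x y : V, v ∈ Y → x ∈ Y → y ∈ Y → G.Adj v x → G.Adj v y →
      φ v < φ x → φ v < φ y → x ≠ y → G.Adj x y) :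
    Chordal (G.induce Y) := by
  intro n hn ⟨f, hinj, hadj⟩
  haveI : NeZero n := ⟨by omega⟩
  haveI : Fact (1 < n) := ⟨by omega⟩
  have hone : (1 : ZMod n) ≠ 0 := one_ne_zero
  have htwo : (2 : ZMod n) ≠ 0 := by
    have h2 : ((2 : ℕ) : ZMod n) ≠ 0 := by
      rw [Ne, ZMod.natCast_eq_zero_iff]
      intro h
      have := Nat.le_of_dvd (by norm_num) h
      omega
    simpa using h2
  have hthree : (3 : ZMod n) ≠ 0 := by
    have h3 : ((3 : ℕ) : ZMod n) ≠ 0 := by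
      rw [Ne, ZMod.natCast_eq_zero_iff]
      intro h
      have := Nat.le_of_dvd (by norm_num) h
      omega
    simpa using h3
  obtain ⟨i₀, _, hmin⟩ := (Finset.univ : Finset (ZMod n)).exists_min_image
    (fun i => φ (f i).1) ⟨0, Finset.mem_univ 0⟩
  set v := f i₀ with hv
  set x := f (i₀ + 1) with hx
  set y := f (i₀ - 1) with hy
  have hvx : G.Adj v.1 x.1 := (hadj i₀ (i₀ + 1)).2 (Or.inl rfl)
  have hvy : G.Adj v.1 y.1 := (hadj i₀ (i₀ - 1)).2 (Or.inr (by ring))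
  have hxyne : x ≠ y := fun h => htwo (by linear_combination (hinj h))
  have hnxy : ¬ G.Adj x.1 y.1 := by
    intro h
    rcases (hadj (i₀ + 1) (i₀ - 1)).1 h with h1 | h1
    · exact hthree (by linear_combination - h1)
    · exact hone (by linear_combination h1)
  have hvxne : v ≠ x := fun h => hone (by linear_combination - (hinj h))
  have hvyne : v ≠ y := fun h => hone (by linear_combination (hinj h))
  have hφvx : φ v.1 < φ x.1 :=
    lt_of_le_of_ne (hmin _ (Finset.mem_univ _)) (fun h => hvxne (Subtype.ext (hφ h)))
  have hφvy : φ v.1 < φ y.1 :=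
    lt_of_le_of_ne (hmin _ (Finset.mem_univ _)) (fun h => hvyne (Subtype.ext (hφ h)))
  exact hnxy (hY v.1 x.1 y.1 v.2 x.2 y.2 hvx hvy hφvx hφvy (fun h => hxyne (Subtype.ext h)))


/-- Core combinatorial lemma: a small "hitting set" `S` such that outside `S`
no vertex of `X` has two nonadjacent forward neighbours in `X`. -/
lemma exists_hitting_set {V : Type*} [Fintype V] (k l : ℕ) (G : SimpleGraph V) (φ : V → ℝ)
    (hφ : Function.Injective φ) (hfree : J16klFree G φ k l)
    (L : V → Finset (Fin 3))
    (hfwd : ∀ v : V, 2 ≤ (L v).card →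
      ({u : V | G.Adj v u ∧ φ v < φ u ∧ 2 ≤ (L u).card} : Set V).ncard ≤ 2)
    (hX : 3 * k + 3 * l + 6 ≤ ({v : V | 2 ≤ (L v).card} : Set V).ncard) :
    ∃ S : Finset V, S.card ≤ 3 * k + 3 * l + 6 ∧
      ∀ v x y : V, 2 ≤ (L v).card → 2 ≤ (L x).card → 2 ≤ (L y).card →
        v ∉ S → x ∉ S → y ∉ S → G.Adj v x → G.Adj v y →
        φ v < φ x → φ v < φ y → x ≠ y → G.Adj x y := by
  classical
  set X : Finset V := univ.filter (fun v => 2 ≤ (L v).card) with hXdef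
  have hmemX : ∀ v, v ∈ X ↔ 2 ≤ (L v).card := by
    intro v; simp [hXdef]
  set Fwd : V → Finset V :=
    fun v => univ.filter (fun u => G.Adj v u ∧ φ v < φ u ∧ 2 ≤ (L u).card) with hFwddef
  have hmemFwd : ∀ v u, u ∈ Fwd v ↔ G.Adj v u ∧ φ v < φ u ∧ 2 ≤ (L u).card := by
    intro v u; simp [hFwddef]
  have hFwd2 : ∀ v, 2 ≤ (L v).card → (Fwd v).card ≤ 2 := by
    intro v hv
    have hcoe : (↑(Fwd v) : Set V) = {u : V | G.Adj v u ∧ φ v < φ u ∧ 2 ≤ (L u).card} := by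
      ext u; simp [hFwddef]
    have := hfwd v hv
    rwa [← hcoe, Set.ncard_coe_finset] at this
  have hXcard : 3 * k + 3 * l + 6 ≤ X.card := by
    have hcoe : (↑X : Set V) = {v : V | 2 ≤ (L v).card} := by ext v; simp [hXdef]
    rwa [← hcoe, Set.ncard_coe_finset] at hX
  -- the top `3l+3` vertices of `X`
  obtain ⟨B0, hB0sub, hB0card, hB0top⟩ := exists_top_subset φ hφ (3 * l + 3) X (by omega)
  -- triples
  set isT : V → Prop := fun v => 2 ≤ (L v).card ∧ (Fwd v).card = 2 ∧
      ∀ x ∈ Fwd v, ∀ y ∈ Fwd v, x ≠ y → ¬ G.Adj x y with hisTdef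
  set trip : V → Finset V := fun v => insert v (Fwd v) with htripdef
  have htripcard : ∀ v, isT v → (trip v).card ≤ 3 := by
    intro v hv
    calc (trip v).card ≤ (Fwd v).card + 1 := card_insert_le _ _
      _ ≤ 3 := by rw [hv.2.1]
  have hmem_trip : ∀ v z, z ∈ trip v ↔ z = v ∨ z ∈ Fwd v := by
    intro v z; simp [htripdef]
  -- a maximal family of pairwise disjoint triples avoiding B0
  set good : Finset V → Prop := fun F =>
    (∀ v ∈ F, isT v ∧ trip v ∩ B0 = ∅) ∧
    (∀ v ∈ F, ∀ w ∈ F, v ≠ w → trip v ∩ trip w = ∅) with hgooddef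
  have hgoodempty : good ∅ := ⟨fun v hv => absurd hv (notMem_empty v),
    fun v hv => absurd hv (notMem_empty v)⟩
  obtain ⟨F, hFmem, hFmax⟩ := ((univ : Finset (Finset V)).filter good).exists_max_image
    card ⟨∅, mem_filter.2 ⟨mem_univ _, hgoodempty⟩⟩
  have hFgood : good F := (mem_filter.1 hFmem).2
  have hFmax' : ∀ F' : Finset V, good F' → F'.card ≤ F.card := by
    intro F' hF'
    exact hFmax F' (mem_filter.2 ⟨mem_univ _, hF'⟩)
  by_cases hFk : F.card ≤ k
  · -- small maximal family: build the hitting set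
    refine ⟨B0 ∪ F.biUnion trip, ?_, ?_⟩
    · have h1 : (F.biUnion trip).card ≤ 3 * F.card := by
        calc (F.biUnion trip).card ≤ ∑ v ∈ F, (trip v).card := card_biUnion_le
          _ ≤ ∑ v ∈ F, 3 := by
            refine Finset.sum_le_sum ?_
            intro v hv
            exact htripcard v ((hFgood.1 v hv).1)
          _ = 3 * F.card := by rw [Finset.sum_const, smul_eq_mul, mul_comm]
      calc (B0 ∪ F.biUnion trip).card ≤ B0.card + (F.biUnion trip).card := card_union_le _ _
        _ ≤ (3 * l + 3) + 3 * k := by omega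
        _ ≤ 3 * k + 3 * l + 6 := by omega
    · intro v x y hvL hxL hyL hvS hxS hyS hAvx hAvy hpvx hpvy hxy
      by_contra hnadj
      -- then `v` is a triple vertex whose triple avoids `S`, contradicting maximality
      have hxF : x ∈ Fwd v := (hmemFwd v x).2 ⟨hAvx, hpvx, hxL⟩
      have hyF : y ∈ Fwd v := (hmemFwd v y).2 ⟨hAvy, hpvy, hyL⟩
      have hpairsub : ({x, y} : Finset V) ⊆ Fwd v := by
        intro z hz; rcases mem_insert.1 hz with rfl | hz
        · exact hxF
        · rw [mem_singleton.1 hz]; exact hyF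
      have hFv : Fwd v = {x, y} := by
        refine (eq_of_subset_of_card_le hpairsub ?_).symm
        rw [card_pair hxy]
        exact hFwd2 v hvL
      have hT : isT v := by
        refine ⟨hvL, by rw [hFv]; exact card_pair hxy, ?_⟩
        intro x' hx' y' hy' hne
        rw [hFv, mem_insert, mem_singleton] at hx' hy'
        rcases hx' with rfl | rfl <;> rcases hy' with rfl | rfl
        · exact absurd rfl hne
        · exact hnadj
        · exact fun h => hnadj h.symm
        · exact absurd rfl hne
      have htripv : ∀ z ∈ trip v, z ∉ B0 ∪ F.biUnion trip := by
        intro z hz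
        rcases (hmem_trip v z).1 hz with rfl | hz'
        · exact hvS
        · rw [hFv] at hz'
          rcases mem_insert.1 hz' with rfl | hz''
          · exact hxS
          · rw [mem_singleton.1 hz'']; exact hyS
      have hgood' : good (insert v F) := by
        constructor
        · intro w hw
          rcases mem_insert.1 hw with rfl | hw
          · refine ⟨hT, eq_empty_of_forall_notMem ?_⟩
            intro z hz
            obtain ⟨hz1, hz2⟩ := mem_inter.1 hz
            exact htripv z hz1 (mem_union_left _ hz2)
          · exact hFgood.1 w hw
        · have hdisj : ∀ w ∈ F, trip v ∩ trip w = ∅ := by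
            intro w hw
            refine eq_empty_of_forall_notMem ?_
            intro z hz
            obtain ⟨hz1, hz2⟩ := mem_inter.1 hz
            refine htripv z hz1 (mem_union_right _ ?_)
            exact mem_biUnion.2 ⟨w, hw, hz2⟩
          intro w hw w' hw' hne
          rcases mem_insert.1 hw with hw1 | hw1
          · subst hw1
            rcases mem_insert.1 hw' with hw2 | hw2
            · exact absurd hw2.symm hne
            · exact hdisj w' hw2
          · rcases mem_insert.1 hw' with hw2 | hw2
            · subst hw2
              rw [inter_comm]; exact hdisj w hw1
            · exact hFgood.2 w hw1 w' hw2 hne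
      have hvnotF : v ∉ F := by
        intro hvF
        refine htripv v ((hmem_trip v v).2 (Or.inl rfl)) (mem_union_right _ ?_)
        exact mem_biUnion.2 ⟨v, hvF, (hmem_trip v v).2 (Or.inl rfl)⟩
      have := hFmax' (insert v F) hgood'
      rw [card_insert_of_notMem hvnotF] at this
      omega
  · -- big family: contradiction with J16-freeness
    exfalso
    have hk1 : k + 1 ≤ F.card := by omega
    obtain ⟨g, hgF, hgmono⟩ := exists_monotone_enum φ hφ F (k + 1) hk1
    have hgT : ∀ i, isT (g i) := fun i => (hFgood.1 _ (hgF i)).1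
    have hgB0 : ∀ i, trip (g i) ∩ B0 = ∅ := fun i => (hFgood.1 _ (hgF i)).2
    have hgne : ∀ i j : Fin (k + 1), i ≠ j → g i ≠ g j := by
      intro i j hij h
      rcases lt_or_gt_of_ne hij with h' | h'
      · exact absurd (h ▸ hgmono i j h') (lt_irrefl _)
      · exact absurd (h ▸ hgmono j i h') (lt_irrefl _)
    have hgdisj : ∀ i j, i ≠ j → trip (g i) ∩ trip (g j) = ∅ :=
      fun i j hij => hFgood.2 _ (hgF i) _ (hgF j) (hgne i j hij)
    set p := g (Fin.last k) with hpdef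
    have hpL : 2 ≤ (L p).card := (hgT _).1
    obtain ⟨x, y, hFp, hφxy⟩ : ∃ x y, Fwd p = {x, y} ∧ φ x < φ y := by
      obtain ⟨x0, y0, hne0, hF0⟩ := card_eq_two.1 (hgT (Fin.last k)).2.1
      rcases lt_or_gt_of_ne (fun h => hne0 (hφ h) : φ x0 ≠ φ y0) with h' | h'
      · exact ⟨x0, y0, hF0, h'⟩
      · exact ⟨y0, x0, by rw [hF0, pair_comm], h'⟩
    have hxmem : x ∈ Fwd p := by rw [hFp]; exact mem_insert_self _ _
    have hymem : y ∈ Fwd p := by rw [hFp]; exact mem_insert_of_mem (mem_singleton_self _)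
    obtain ⟨hpx, hφpx, hxL⟩ := (hmemFwd p x).1 hxmem
    obtain ⟨hpy, hφpy, hyL⟩ := (hmemFwd p y).1 hymem
    have hxyne : x ≠ y := fun h => absurd (h ▸ hφxy) (lt_irrefl _)
    have hnxy : ¬ G.Adj x y := (hgT (Fin.last k)).2.2 x hxmem y hymem hxyne
    have hnotB0 : ∀ z ∈ trip p, z ∉ B0 := by
      intro z hz hzB0
      have : z ∈ trip p ∩ B0 := mem_inter.2 ⟨hz, hzB0⟩
      rw [hgB0 (Fin.last k)] at this
      exact notMem_empty z this
    have hpB0 : p ∉ B0 := hnotB0 p ((hmem_trip p p).2 (Or.inl rfl))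
    have hxB0 : x ∉ B0 := hnotB0 x ((hmem_trip p x).2 (Or.inr hxmem))
    have hyB0 : y ∉ B0 := hnotB0 y ((hmem_trip p y).2 (Or.inr hymem))
    have hpX : p ∈ X := (hmemX p).2 hpL
    have hxX : x ∈ X := (hmemX x).2 hxL
    have hyX : y ∈ X := (hmemX y).2 hyL
    -- the pool for the `b`-vertices
    set P : Finset V := B0 \ (Fwd x ∪ Fwd y) with hPdef
    have hPB0 : P ⊆ B0 := sdiff_subset
    have hPcard : 3 * l ≤ P.card + 2 := by
      have h4 : (Fwd x ∪ Fwd y).card ≤ 4 := by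
        have := card_union_le (Fwd x) (Fwd y)
        have hx2 := hFwd2 x hxL
        have hy2 := hFwd2 y hyL
        omega
      have hle : B0.card - (Fwd x ∪ Fwd y).card ≤ P.card := le_card_sdiff _ _
      omega
    have hPbd : ∀ q ∈ P, (P.filter (fun r => G.Adj q r ∧ φ q < φ r)).card ≤ 2 := by
      intro q hq
      have hqL : 2 ≤ (L q).card := (hmemX q).1 (hB0sub (hPB0 hq))
      refine le_trans (card_le_card ?_) (hFwd2 q hqL)
      intro r hr
      obtain ⟨hr1, hr2, hr3⟩ := mem_filter.1 hr
      exact (hmemFwd q r).2 ⟨hr2, hr3, (hmemX r).1 (hB0sub (hPB0 hr1))⟩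
    obtain ⟨Q, hQP, hQcard, hQind⟩ := greedy_indep G φ hφ l P hPbd hPcard
    obtain ⟨b, hbQ', hbmono⟩ := exists_monotone_enum φ hφ Q l (le_of_eq hQcard.symm)
    have hbQ : ∀ j, b j ∈ Q := hbQ'
    have hbB0 : ∀ j, b j ∈ B0 := fun j => hPB0 (hQP (hbQ j))
    have hbL : ∀ j, 2 ≤ (L (b j)).card := fun j => (hmemX _).1 (hB0sub (hbB0 j))
    have hφyb : ∀ j, φ y < φ (b j) := fun j => hB0top y hyX hyB0 (b j) (hbB0 j)
    set a : Fin k → V := fun i => g i.castSucc with hadef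
    set u : Fin 3 → V := ![p, x, y] with hudef
    have hu0 : u 0 = p := rfl
    have hu1 : u 1 = x := rfl
    have hu2 : u 2 = y := rfl
    have haL : ∀ i, 2 ≤ (L (a i)).card := fun i => (hgT _).1
    have hφap : ∀ i, φ (a i) < φ p := fun i => hgmono _ _ (Fin.castSucc_lt_last i)
    have hane : ∀ i : Fin k, i.castSucc ≠ Fin.last k := fun i => Fin.ne_of_lt (Fin.castSucc_lt_last i)
    -- pairwise nonadjacency among the `g`'s
    have hkey : ∀ i j : Fin (k + 1), i < j → ¬ G.Adj (g i) (g j) := by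
      intro i j hij hadj
      have hmem : g j ∈ Fwd (g i) := (hmemFwd _ _).2 ⟨hadj, hgmono i j hij, (hgT j).1⟩
      have h1 : g j ∈ trip (g i) := (hmem_trip _ _).2 (Or.inr hmem)
      have h2 : g j ∈ trip (g j) := (hmem_trip _ _).2 (Or.inl rfl)
      have h3 := hgdisj i j (ne_of_lt hij)
      have : g j ∈ trip (g i) ∩ trip (g j) := mem_inter.2 ⟨h1, h2⟩
      rw [h3] at this
      exact notMem_empty _ this
    have hgnadj : ∀ i j : Fin (k + 1), i ≠ j → ¬ G.Adj (g i) (g j) := by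
      intro i j hij
      rcases lt_or_gt_of_ne hij with h' | h'
      · exact hkey i j h'
      · exact fun h => hkey j i h' h.symm
    -- `a` vertices are nonadjacent to anything forward of them in `X` outside their triple
    have haFwd : ∀ (i : Fin k) (z : V), G.Adj (a i) z → φ (a i) < φ z → 2 ≤ (L z).card →
        z ∈ trip (a i) := by
      intro i z h1 h2 h3
      exact (hmem_trip _ _).2 (Or.inr ((hmemFwd _ _).2 ⟨h1, h2, h3⟩))
    refine hfree ⟨a, u, b, ?_, ?_, ?_, ?_, ?_, ?_, ?_, ?_, ?_, ?_, ?_, ?_, ?_⟩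
    · exact fun i j hij => hgmono _ _ (by simpa using hij)
    · intro i j hij
      fin_cases i <;> fin_cases j <;>
        first
          | exact absurd hij (by decide)
          | exact hφpx
          | exact lt_trans hφpx hφxy
          | exact hφxy
    · exact hbmono
    · intro i j
      fin_cases j
      · exact hφap i
      · exact lt_trans (hφap i) hφpx
      · exact lt_trans (hφap i) (lt_trans hφpx hφxy)
    · intro i j
      fin_cases i
      · exact lt_trans hφpx (lt_trans hφxy (hφyb j))
      · exact lt_trans hφxy (hφyb j)
      · exact hφyb j
    · exact hpx
    · exact hpy
    · exact hnxy
    · intro i j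
      by_cases hij : i = j
      · subst hij; exact G.irrefl
      · exact hgnadj _ _ (fun h => hij (by simpa using Fin.castSucc_injective k h))
    · intro i j
      by_cases hij : i = j
      · subst hij; exact G.irrefl
      · refine hQind (b i) (hbQ i) (b j) (hbQ j) ?_
        intro h
        rcases lt_or_gt_of_ne hij with h' | h'
        · exact absurd (h ▸ hbmono i j h') (lt_irrefl _)
        · exact absurd (h ▸ hbmono j i h') (lt_irrefl _)
    · intro i j hadj
      have hjtrip : u j ∈ trip p ∧ φ (a i) < φ (u j) ∧ 2 ≤ (L (u j)).card := by
        fin_cases j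
        · exact ⟨(hmem_trip p p).2 (Or.inl rfl), hφap i, hpL⟩
        · exact ⟨(hmem_trip p x).2 (Or.inr hxmem), lt_trans (hφap i) hφpx, hxL⟩
        · exact ⟨(hmem_trip p y).2 (Or.inr hymem),
            lt_trans (hφap i) (lt_trans hφpx hφxy), hyL⟩
      have h1 : u j ∈ trip (a i) := haFwd i (u j) hadj hjtrip.2.1 hjtrip.2.2
      have h2 := hgdisj i.castSucc (Fin.last k) (hane i)
      have : u j ∈ trip (a i) ∩ trip p := mem_inter.2 ⟨h1, hjtrip.1⟩
      rw [h2] at this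
      exact notMem_empty _ this
    · intro i j hadj
      have hφab : φ (a i) < φ (b j) := by
        have h1 : φ (a i) < φ p := hφap i
        have h2 := hφyb j
        linarith
      have h1 : b j ∈ trip (a i) := haFwd i (b j) hadj hφab (hbL j)
      have : b j ∈ trip (a i) ∩ B0 := mem_inter.2 ⟨h1, hbB0 j⟩
      rw [hgB0 i.castSucc] at this
      exact notMem_empty _ this
    · intro i j
      fin_cases i
      · intro hadj
        have hmem : b j ∈ Fwd p := (hmemFwd _ _).2
          ⟨hadj, lt_trans hφpx (lt_trans hφxy (hφyb j)), hbL j⟩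
        rw [hFp] at hmem
        rcases mem_insert.1 hmem with h' | h'
        · exact hxB0 (h' ▸ hbB0 j)
        · exact hyB0 ((mem_singleton.1 h') ▸ hbB0 j)
      · intro hadj
        have hmem : b j ∈ Fwd x := (hmemFwd _ _).2
          ⟨hadj, lt_trans hφxy (hφyb j), hbL j⟩
        have hnot : b j ∉ P := fun hP => (mem_sdiff.1 hP).2 (mem_union_left _ hmem)
        exact hnot (hQP (hbQ j))
      · intro hadj
        have hmem : b j ∈ Fwd y := (hmemFwd _ _).2 ⟨hadj, hφyb j, hbL j⟩
        have hnot : b j ∉ P := fun hP => (mem_sdiff.1 hP).2 (mem_union_right _ hmem)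
        exact hnot (hQP (hbQ j))

end Core

/-- Let `(G, φ)` be a `J₁₆(k, l)`-free ordered graph with a 3-list-assignment `L`,
let `X` be the set of vertices whose list has size at least 2, and assume that in
`G[X]` every vertex has at most two forward neighbors and `|X| ≥ 3k + 3l + 6`.
Then there is a family `𝓛` of at most `3 ^ (3k + 3l + 6)` refinements of `L` such
that for every `L* ∈ 𝓛` the subgraph of `G` induced by the vertices whose `L*`-list
has size at least 2 is chordal, and every `L`-coloring of `G` is an `L*`-coloring
for some `L* ∈ 𝓛`. -/
theorem exists_profile_chordal
    {V : Type*} [Fintype V] (k l : ℕ) (G : SimpleGraph V) (φ : V → ℝ)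
    (hφ : Function.Injective φ) (hfree : J16klFree G φ k l)
    (L : V → Finset (Fin 3))
    (hfwd : ∀ v : V, 2 ≤ (L v).card →
      ({u : V | G.Adj v u ∧ φ v < φ u ∧ 2 ≤ (L u).card} : Set V).ncard ≤ 2)
    (hX : 3 * k + 3 * l + 6 ≤ ({v : V | 2 ≤ (L v).card} : Set V).ncard) :
    ∃ 𝓛 : Finset (V → Finset (Fin 3)),
      𝓛.card ≤ 3 ^ (3 * k + 3 * l + 6) ∧
      (∀ L' ∈ 𝓛, ∀ v : V, L' v ⊆ L v) ∧
      (∀ L' ∈ 𝓛, Chordal (G.induce {v : V | 2 ≤ (L' v).card})) ∧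
      (∀ c : V → Fin 3, (∀ u v, G.Adj u v → c u ≠ c v) → (∀ v, c v ∈ L v) →
        ∃ L' ∈ 𝓛, ∀ v, c v ∈ L' v) := by
  classical
  obtain ⟨S, hScard, hSprop⟩ := exists_hitting_set k l G φ hφ hfree L hfwd hX
  refine ⟨(Finset.univ : Finset (↥S → Fin 3)).image
      (fun g => fun v => if h : v ∈ S then L v ∩ {g ⟨v, h⟩} else L v), ?_, ?_, ?_, ?_⟩
  · refine le_trans Finset.card_image_le ?_
    rw [Finset.card_univ, Fintype.card_fun, Fintype.card_fin, Fintype.card_coe]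
    exact Nat.pow_le_pow_right (by norm_num) hScard
  · intro L' hL' v
    obtain ⟨g, _, rfl⟩ := Finset.mem_image.1 hL'
    dsimp only
    split_ifs with h
    · exact Finset.inter_subset_left
    · exact subset_rfl
  · intro L' hL'
    obtain ⟨g, _, rfl⟩ := Finset.mem_image.1 hL'
    apply chordal_of_no_bad G φ hφ
    intro v x y hv hx hy hAvx hAvy hpvx hpvy hxy
    have hkey : ∀ z : V, 2 ≤ ((fun v => if h : v ∈ S then L v ∩ {g ⟨v, h⟩} else L v) z).card →
        z ∉ S ∧ 2 ≤ (L z).card := by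
      intro z hz
      dsimp only at hz
      split_ifs at hz with h
      · exfalso
        have h1 : (L z ∩ {g ⟨z, h⟩}).card ≤ 1 := by
          calc (L z ∩ {g ⟨z, h⟩}).card ≤ ({g ⟨z, h⟩} : Finset (Fin 3)).card :=
            Finset.card_le_card Finset.inter_subset_right
          _ = 1 := Finset.card_singleton _
        omega
      · exact ⟨h, hz⟩
    obtain ⟨hvS, hvL⟩ := hkey v hv
    obtain ⟨hxS, hxL⟩ := hkey x hx
    obtain ⟨hyS, hyL⟩ := hkey y hy
    exact hSprop v x y hvL hxL hyL hvS hxS hyS hAvx hAvy hpvx hpvy hxy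
  · intro c hproper hc
    refine ⟨_, Finset.mem_image_of_mem _ (Finset.mem_univ (fun s : ↥S => c s.1)), ?_⟩
    intro v
    dsimp only
    split_ifs with h
    · exact Finset.mem_inter.2 ⟨hc v, Finset.mem_singleton_self _⟩
    · exact hc v
end
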